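/- (Chain rule inequality for Caputo-type derivatives with H¹ kernels.) Let T > 0 and let k̃ : [0,T] → ℝ be nonnegative, nonincreasing and absolutely continuous with k̃(t) = k̃(0) + ∫₀ᵗ k̃'(s) ds for some k̃' ∈ L²((0,T)) (i.e. k̃ ∈ H¹([0,T])). Let h : ℝ → ℝ be convex and continuously differentiable, let f ∈ L^∞((0,T)), and let f₀ ∈ ℝ. Then for a.e. t ∈ (0,T) there exist real numbers D₁, D₂ such that the function k̃*(f − f₀) is differentiable at t with derivative D₁, the function k̃*(h∘f − h(f₀)) is differentiable at t with derivative D₂, and D₂ ≤ h'(f(t))·D₁. In the notation of generalized fractional derivatives: ∂_t[k̃*(h(f) − h(f₀))](t) ≤ h'(f(t))·∂_t[k̃*(f − f₀)](t) for a.e. t ∈ (0,T). -/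

import Mathlib

open MeasureTheory Set Filter Metric intervalIntegral Topology
open scoped Interval

lemma tangent_le {h h' : ℝ → ℝ} (hconv : ConvexOn ℝ Set.univ h)
    (hderiv : ∀ x : ℝ, HasDerivAt h (h' x) x) (x y : ℝ) :
    h x + h' x * (y - x) ≤ h y := by
  rcases lt_trichotomy x y with hxy | rfl | hyx
  · have h1 := hconv.le_slope_of_hasDerivAt (mem_univ x) (mem_univ y) hxy (hderiv x)
    rw [slope_def_field, le_div_iff₀ (by linarith)] at h1
    linarith
  · simp
  · have h1 := hconv.slope_le_of_hasDerivAt (mem_univ y) (mem_univ x) hyx (hderiv x)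
    rw [slope_def_field, div_le_iff₀ (by linarith)] at h1
    linarith


lemma ae_hasDerivAt_primitive {q : ℝ → ℝ} (hq : Integrable q (volume : Measure ℝ)) :
    ∀ᵐ t : ℝ, HasDerivAt (fun u => ∫ s in (0:ℝ)..u, q s) (q t) t := by
  have hli : LocallyIntegrable q volume := hq.locallyIntegrable
  filter_upwards [IsUnifLocDoublingMeasure.ae_tendsto_average_norm_sub volume hli 1] with t ht
  have hδ : Tendsto (fun u : ℝ => |u - t|) (𝓝[≠] t) (𝓝[>] 0) := by
    rw [tendsto_nhdsWithin_iff]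
    constructor
    · have h0 : Tendsto (fun u : ℝ => |u - t|) (𝓝 t) (𝓝 |t - t|) :=
        ((continuous_id.sub continuous_const).abs).tendsto t
      simpa using h0.mono_left nhdsWithin_le_nhds
    · filter_upwards [self_mem_nhdsWithin] with u hu
      exact abs_pos.2 (sub_ne_zero.2 hu)
  have havg := ht (fun _ : ℝ => t) (fun u => |u - t|) hδ (by
    filter_upwards with u
    simp [Metric.mem_closedBall, abs_nonneg])
  rw [hasDerivAt_iff_tendsto_slope, tendsto_iff_norm_sub_tendsto_zero]
  apply squeeze_zero' (g := fun u => 2 * ⨍ y in closedBall t |u - t|, ‖q y - q t‖)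
  · filter_upwards with u; positivity
  · filter_upwards [self_mem_nhdsWithin] with u (hu : u ≠ t)
    have hδpos : (0:ℝ) < |u - t| := abs_pos.2 (sub_ne_zero.2 hu)
    have hFdiff : (∫ s in (0:ℝ)..u, q s) - ∫ s in (0:ℝ)..t, q s = ∫ s in t..u, q s :=
      integral_interval_sub_left hq.intervalIntegrable hq.intervalIntegrable
    have hsub : Ι t u ⊆ closedBall t |u - t| := by
      intro x hx
      rw [mem_closedBall, Real.dist_eq]
      rw [Set.mem_uIoc] at hx
      rcases hx with ⟨h1, h2⟩ | ⟨h1, h2⟩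
      · rw [abs_of_pos (sub_pos.2 h1), abs_of_pos (sub_pos.2 (h1.trans_le h2))]
        linarith
      · rw [abs_of_nonpos (by linarith), abs_of_neg (by linarith : u - t < 0)]
        linarith
    have hIcb : IntegrableOn (fun s => ‖q s - q t‖) (closedBall t |u - t|) volume :=
      (hq.integrableOn.sub (integrableOn_const measure_closedBall_lt_top.ne)).norm
    have hslope : slope (fun u => ∫ s in (0:ℝ)..u, q s) t u - q t
        = (∫ s in t..u, (q s - q t)) / (u - t) := by
      rw [slope_def_field, hFdiff,
        intervalIntegral.integral_sub hq.intervalIntegrable intervalIntegrable_const,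
        intervalIntegral.integral_const, smul_eq_mul]
      field_simp [sub_ne_zero.2 hu]
    have h1 : ‖∫ s in t..u, (q s - q t)‖ ≤ ∫ s in Ι t u, ‖q s - q t‖ :=
      intervalIntegral.norm_integral_le_integral_norm_uIoc
    have h2 : ∫ s in Ι t u, ‖q s - q t‖ ≤ ∫ s in closedBall t |u - t|, ‖q s - q t‖ := by
      apply setIntegral_mono_set hIcb
      · filter_upwards with x using norm_nonneg _
      · exact hsub.eventuallyLE
    have h3 : ∫ s in closedBall t |u - t|, ‖q s - q t‖
        = (2 * |u - t|) * ⨍ y in closedBall t |u - t|, ‖q y - q t‖ := by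
      rw [setAverage_eq, smul_eq_mul, Real.volume_real_closedBall (abs_nonneg _)]
      field_simp
    calc ‖slope (fun u => ∫ s in (0:ℝ)..u, q s) t u - q t‖
        = ‖∫ s in t..u, (q s - q t)‖ / |u - t| := by
          rw [hslope, norm_div, Real.norm_eq_abs (u - t)]
      _ ≤ 2 * ⨍ y in closedBall t |u - t|, ‖q y - q t‖ := by
          rw [div_le_iff₀ hδpos]
          calc ‖∫ s in t..u, (q s - q t)‖
              ≤ (2 * |u - t|) * ⨍ y in closedBall t |u - t|, ‖q y - q t‖ :=
                le_trans h1 (le_trans h2 (le_of_eq h3))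
            _ = (2 * ⨍ y in closedBall t |u - t|, ‖q y - q t‖) * |u - t| := by ring
  · simpa using havg.const_mul 2

-- general swap lemma for truncated-convolution-type double integrals
lemma conv_fubini_aux {u C : ℝ} (hu : 0 ≤ u) {K g : ℝ → ℝ}
    (hK : Integrable K (volume : Measure ℝ)) (hKm : Measurable K)
    (hg : Measurable g) (hgC : ∀ x, |g x| ≤ C) :
    ∫ τ in Ioc (0:ℝ) u, (∫ σ in Ioc (0:ℝ) (u - τ), K σ) * g τ
      = ∫ σ in Ioc (0:ℝ) u, K σ * (∫ τ in Ioc (0:ℝ) (u - σ), g τ) := by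
  classical
  set W : ℝ → ℝ → ℝ := fun τ σ => if 0 < τ ∧ 0 < σ ∧ τ + σ ≤ u then K σ * g τ else 0 with hW
  have hS : MeasurableSet {p : ℝ × ℝ | 0 < p.1 ∧ 0 < p.2 ∧ p.1 + p.2 ≤ u} := by
    apply MeasurableSet.inter
    · exact measurableSet_lt measurable_const measurable_fst
    apply MeasurableSet.inter
    · exact measurableSet_lt measurable_const measurable_snd
    · exact measurableSet_le (measurable_fst.add measurable_snd) measurable_const
  have hWm : Measurable (Function.uncurry W) := by
    have : Function.uncurry W = fun p : ℝ × ℝ =>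
        Set.indicator {p : ℝ × ℝ | 0 < p.1 ∧ 0 < p.2 ∧ p.1 + p.2 ≤ u}
          (fun p => K p.2 * g p.1) p := by
      ext p
      simp only [Function.uncurry, Set.indicator, mem_setOf_eq, hW]
    rw [this]
    exact ((hKm.comp measurable_snd).mul (hg.comp measurable_fst)).indicator hS
  have hWint : Integrable (Function.uncurry W) (volume.prod volume) := by
    have hbound : Integrable (fun p : ℝ × ℝ =>
        (Ioc (0:ℝ) u).indicator (fun _ => |C|) p.1 * |K p.2|) (volume.prod volume) := by
      have h1 : Integrable ((Ioc (0:ℝ) u).indicator (fun _ => |C|)) volume := by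
        rw [integrable_indicator_iff measurableSet_Ioc]
        exact integrableOn_const measure_Ioc_lt_top.ne
      exact h1.mul_prod hK.abs
    apply hbound.mono' hWm.aestronglyMeasurable
    filter_upwards with p
    simp only [Function.uncurry, hW]
    by_cases hp : 0 < p.1 ∧ 0 < p.2 ∧ p.1 + p.2 ≤ u
    · rw [if_pos hp]
      have hp1 : p.1 ∈ Ioc (0:ℝ) u := ⟨hp.1, by linarith [hp.2.1, hp.2.2]⟩
      rw [Set.indicator_of_mem hp1]
      rw [Real.norm_eq_abs, abs_mul]
      calc |K p.2| * |g p.1| ≤ |K p.2| * |C| :=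
            mul_le_mul_of_nonneg_left ((hgC p.1).trans (le_abs_self C)) (abs_nonneg _)
        _ = |C| * |K p.2| := mul_comm _ _
    · rw [if_neg hp]
      simp only [norm_zero]
      exact mul_nonneg (Set.indicator_nonneg (fun _ _ => abs_nonneg C) _) (abs_nonneg _)
  have hswap := MeasureTheory.integral_integral_swap hWint
  -- LHS
  have hL : ∫ τ, ∫ σ, W τ σ = ∫ τ in Ioc (0:ℝ) u, (∫ σ in Ioc (0:ℝ) (u - τ), K σ) * g τ := by
    rw [← setIntegral_eq_integral_of_forall_compl_eq_zero (s := Ioc (0:ℝ) u) (f := fun τ => ∫ σ, W τ σ)]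
    · apply setIntegral_congr_fun measurableSet_Ioc
      intro τ hτ
      have : ∀ σ, W τ σ = (Ioc (0:ℝ) (u - τ)).indicator K σ * g τ := by
        intro σ
        simp only [hW, Set.indicator, mem_Ioc]
        by_cases hσ : 0 < σ ∧ σ ≤ u - τ
        · rw [if_pos ⟨hτ.1, hσ.1, by linarith [hσ.2]⟩, if_pos hσ]
        · rw [if_neg, if_neg hσ, zero_mul]
          rintro ⟨h1, h2, h3⟩
          exact hσ ⟨h2, by linarith⟩
      simp only [this]
      rw [MeasureTheory.integral_mul_const, MeasureTheory.integral_indicator measurableSet_Ioc]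
    · intro τ hτ
      have : ∀ σ, W τ σ = 0 := by
        intro σ
        simp only [hW]
        rw [if_neg]
        rintro ⟨h1, h2, h3⟩
        exact hτ ⟨h1, by linarith⟩
      simp [this]
  -- RHS
  have hR : ∫ σ, ∫ τ, W τ σ = ∫ σ in Ioc (0:ℝ) u, K σ * (∫ τ in Ioc (0:ℝ) (u - σ), g τ) := by
    rw [← setIntegral_eq_integral_of_forall_compl_eq_zero (s := Ioc (0:ℝ) u)
        (f := fun σ => ∫ τ, W τ σ)]
    · apply setIntegral_congr_fun measurableSet_Ioc
      intro σ hσ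
      have : ∀ τ, W τ σ = (Ioc (0:ℝ) (u - σ)).indicator (fun τ => K σ * g τ) τ := by
        intro τ
        simp only [hW, Set.indicator, mem_Ioc]
        by_cases hτ : 0 < τ ∧ τ ≤ u - σ
        · rw [if_pos ⟨hτ.1, hσ.1, by linarith [hτ.2]⟩, if_pos hτ]
        · rw [if_neg, if_neg hτ]
          rintro ⟨h1, h2, h3⟩
          exact hτ ⟨h1, by linarith⟩
      simp only [this]
      rw [MeasureTheory.integral_indicator measurableSet_Ioc, ← MeasureTheory.integral_const_mul]
    · intro σ hσ
      have : ∀ τ, W τ σ = 0 := by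
        intro τ
        simp only [hW]
        rw [if_neg]
        rintro ⟨h1, h2, h3⟩
        exact hσ ⟨h2, by linarith⟩
      simp [this]
  rw [← hL, ← hR]
  exact hswap

lemma conv_fubini2_aux {u C : ℝ} (hu : 0 ≤ u) {K g : ℝ → ℝ}
    (hK : Integrable K (volume : Measure ℝ)) (hKm : Measurable K)
    (hg : Measurable g) (hgC : ∀ x, |g x| ≤ C) :
    ∫ s in Ioc (0:ℝ) u, (∫ σ in Ioc (0:ℝ) s, K σ * g (s - σ))
      = ∫ σ in Ioc (0:ℝ) u, K σ * (∫ τ in Ioc (0:ℝ) (u - σ), g τ) := by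
  classical
  set W : ℝ → ℝ → ℝ := fun s σ => if 0 < σ ∧ σ ≤ s ∧ s ≤ u then K σ * g (s - σ) else 0 with hW
  have hS : MeasurableSet {p : ℝ × ℝ | 0 < p.2 ∧ p.2 ≤ p.1 ∧ p.1 ≤ u} := by
    apply MeasurableSet.inter
    · exact measurableSet_lt measurable_const measurable_snd
    apply MeasurableSet.inter
    · exact measurableSet_le measurable_snd measurable_fst
    · exact measurableSet_le measurable_fst measurable_const
  have hWm : Measurable (Function.uncurry W) := by
    have : Function.uncurry W = fun p : ℝ × ℝ =>
        Set.indicator {p : ℝ × ℝ | 0 < p.2 ∧ p.2 ≤ p.1 ∧ p.1 ≤ u}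
          (fun p => K p.2 * g (p.1 - p.2)) p := by
      ext p
      simp only [Function.uncurry, Set.indicator, mem_setOf_eq, hW]
    rw [this]
    exact ((hKm.comp measurable_snd).mul
      (hg.comp (measurable_fst.sub measurable_snd))).indicator hS
  have hWint : Integrable (Function.uncurry W) (volume.prod volume) := by
    have h1 : Integrable ((Ioc (0:ℝ) u).indicator (fun _ => |C|)) volume := by
      rw [integrable_indicator_iff measurableSet_Ioc]
      exact integrableOn_const measure_Ioc_lt_top.ne
    apply (h1.mul_prod hK.abs).mono' hWm.aestronglyMeasurable
    filter_upwards with p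
    simp only [Function.uncurry, hW]
    by_cases hp : 0 < p.2 ∧ p.2 ≤ p.1 ∧ p.1 ≤ u
    · rw [if_pos hp]
      have hp1 : p.1 ∈ Ioc (0:ℝ) u := ⟨lt_of_lt_of_le hp.1 hp.2.1, hp.2.2⟩
      rw [Set.indicator_of_mem hp1, Real.norm_eq_abs, abs_mul]
      calc |K p.2| * |g (p.1 - p.2)| ≤ |K p.2| * |C| :=
            mul_le_mul_of_nonneg_left ((hgC _).trans (le_abs_self C)) (abs_nonneg _)
        _ = |C| * |K p.2| := mul_comm _ _
    · rw [if_neg hp]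
      simp only [norm_zero]
      exact mul_nonneg (Set.indicator_nonneg (fun _ _ => abs_nonneg C) _) (abs_nonneg _)
  have hswap := MeasureTheory.integral_integral_swap hWint
  have hL : ∫ s, ∫ σ, W s σ = ∫ s in Ioc (0:ℝ) u, (∫ σ in Ioc (0:ℝ) s, K σ * g (s - σ)) := by
    rw [← setIntegral_eq_integral_of_forall_compl_eq_zero (s := Ioc (0:ℝ) u)
        (f := fun s => ∫ σ, W s σ)]
    · apply setIntegral_congr_fun measurableSet_Ioc
      intro s hs
      have : ∀ σ, W s σ = (Ioc (0:ℝ) s).indicator (fun σ => K σ * g (s - σ)) σ := by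
        intro σ
        simp only [hW, Set.indicator, mem_Ioc]
        by_cases hσ : 0 < σ ∧ σ ≤ s
        · rw [if_pos ⟨hσ.1, hσ.2, hs.2⟩, if_pos hσ]
        · rw [if_neg, if_neg hσ]
          rintro ⟨h1, h2, h3⟩
          exact hσ ⟨h1, h2⟩
      simp only [this]
      rw [MeasureTheory.integral_indicator measurableSet_Ioc]
    · intro s hs
      have : ∀ σ, W s σ = 0 := by
        intro σ
        simp only [hW]
        rw [if_neg]
        rintro ⟨h1, h2, h3⟩
        exact hs ⟨lt_of_lt_of_le h1 h2, h3⟩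
      simp [this]
  have hR : ∫ σ, ∫ s, W s σ = ∫ σ in Ioc (0:ℝ) u, K σ * (∫ τ in Ioc (0:ℝ) (u - σ), g τ) := by
    rw [← setIntegral_eq_integral_of_forall_compl_eq_zero (s := Ioc (0:ℝ) u)
        (f := fun σ => ∫ s, W s σ)]
    · apply setIntegral_congr_fun measurableSet_Ioc
      intro σ hσ
      have h1 : ∀ s, W s σ = (Icc σ u).indicator (fun s => K σ * g (s - σ)) s := by
        intro s
        simp only [hW, Set.indicator, mem_Icc]
        by_cases hs : σ ≤ s ∧ s ≤ u
        · rw [if_pos ⟨hσ.1, hs.1, hs.2⟩, if_pos hs]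
        · rw [if_neg, if_neg hs]
          rintro ⟨h1, h2, h3⟩
          exact hs ⟨h2, h3⟩
      simp only [h1]
      rw [MeasureTheory.integral_indicator measurableSet_Icc]
      have h2 : ∫ s in Icc σ u, K σ * g (s - σ) = ∫ s in Ioc σ u, K σ * g (s - σ) :=
        MeasureTheory.integral_Icc_eq_integral_Ioc
      rw [h2]
      have h3 : ∫ s in Ioc σ u, K σ * g (s - σ) = ∫ s in σ..u, K σ * g (s - σ) :=
        (intervalIntegral.integral_of_le hσ.2).symm
      rw [h3, intervalIntegral.integral_comp_sub_right (fun s => K σ * g s) σ, sub_self,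
        intervalIntegral.integral_of_le (by linarith [hσ.1, hσ.2]),
        MeasureTheory.integral_const_mul]
    · intro σ hσ
      have : ∀ s, W s σ = 0 := by
        intro s
        simp only [hW]
        rw [if_neg]
        rintro ⟨h1, h2, h3⟩
        exact hσ ⟨h1, le_trans h2 h3⟩
      simp [this]
  rw [← hL, ← hR]
  exact hswap

lemma abs_sub_le'' (a b : ℝ) : |a - b| ≤ |a| + |b| := by
  simpa [sub_eq_add_neg] using abs_add_le a (-b)

lemma bddIntegrableOn {φ : ℝ → ℝ} {s : Set ℝ} (hφ : AEStronglyMeasurable φ (volume.restrict s))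
    (hμ : volume s ≠ ⊤) {M : ℝ} (hM : ∀ x, |φ x| ≤ M) : IntegrableOn φ s volume := by
  apply Integrable.mono' (g := fun _ => M) (integrableOn_const hμ) hφ
  filter_upwards with x using hM x

lemma conv_meas {Kc g : ℝ → ℝ} (hKcm : Measurable Kc) (hgm : Measurable g) :
    Measurable (fun s => ∫ σ in Ioc (0:ℝ) s, Kc σ * g (s - σ)) := by
  have heq : (fun s => ∫ σ in Ioc (0:ℝ) s, Kc σ * g (s - σ))
      = fun s => ∫ σ, (fun s σ => if 0 < σ ∧ σ ≤ s then Kc σ * g (s - σ) else 0) s σ := by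
    funext s
    rw [← MeasureTheory.integral_indicator measurableSet_Ioc]
    congr 1
    funext σ
    simp only [Set.indicator, mem_Ioc]
  rw [heq]
  have hS : MeasurableSet {p : ℝ × ℝ | 0 < p.2 ∧ p.2 ≤ p.1} :=
    (measurableSet_lt measurable_const measurable_snd).inter
      (measurableSet_le measurable_snd measurable_fst)
  have hunc : Measurable (Function.uncurry
      (fun s σ => if 0 < σ ∧ σ ≤ s then Kc σ * g (s - σ) else 0 : ℝ → ℝ → ℝ)) := by
    have : Function.uncurry
        (fun s σ => if 0 < σ ∧ σ ≤ s then Kc σ * g (s - σ) else 0 : ℝ → ℝ → ℝ)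
        = fun p : ℝ × ℝ => Set.indicator {p : ℝ × ℝ | 0 < p.2 ∧ p.2 ≤ p.1}
          (fun p => Kc p.2 * g (p.1 - p.2)) p := by
      ext p
      simp only [Function.uncurry, Set.indicator, mem_setOf_eq]
    rw [this]
    exact ((hKcm.comp measurable_snd).mul
      (hgm.comp (measurable_fst.sub measurable_snd))).indicator hS
  exact (hunc.stronglyMeasurable.integral_prod_right).measurable

lemma conv_bd {Kc g : ℝ → ℝ} (hKc : Integrable Kc (volume : Measure ℝ))
    {C : ℝ} (hgC : ∀ x, |g x| ≤ C) (s : ℝ) :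
    |∫ σ in Ioc (0:ℝ) s, Kc σ * g (s - σ)| ≤ (∫ σ, |Kc σ|) * C := by
  have hC0 : (0:ℝ) ≤ C := le_trans (abs_nonneg (g 0)) (hgC 0)
  have h1 : ∀ᵐ σ ∂(volume.restrict (Ioc (0:ℝ) s)), ‖Kc σ * g (s - σ)‖ ≤ |Kc σ| * C := by
    filter_upwards with σ
    rw [Real.norm_eq_abs, abs_mul]
    exact mul_le_mul_of_nonneg_left (hgC _) (abs_nonneg _)
  have h2 := norm_integral_le_of_norm_le (g := fun σ => |Kc σ| * C)
    ((hKc.abs.mul_const C).integrableOn) h1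
  refine h2.trans ?_
  have h3 : ∫ σ in Ioc (0:ℝ) s, |Kc σ| * C ≤ ∫ σ, |Kc σ| * C := by
    apply setIntegral_le_integral (hKc.abs.mul_const C)
    filter_upwards with x
    exact mul_nonneg (abs_nonneg _) hC0
  refine h3.trans (le_of_eq ?_)
  rw [MeasureTheory.integral_mul_const]

lemma core_repr (T : ℝ) (ktil Kc g : ℝ → ℝ)
    (hKc : Integrable Kc (volume : Measure ℝ)) (hKcm : Measurable Kc)
    (hkAC : ∀ v ∈ Icc (0:ℝ) T, ktil v = ktil 0 + ∫ σ in (0:ℝ)..v, Kc σ)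
    {C : ℝ} (hgm : Measurable g) (hgC : ∀ x, |g x| ≤ C) :
    ∀ u ∈ Icc (0:ℝ) T,
      ∫ τ in (0:ℝ)..u, ktil (u - τ) * g τ
        = ∫ s in (0:ℝ)..u, (ktil 0 * g s + ∫ σ in Ioc (0:ℝ) s, Kc σ * g (s - σ)) := by
  intro u hu
  have hu0 : (0:ℝ) ≤ u := hu.1
  set P : ℝ → ℝ := fun v => ∫ σ in (0:ℝ)..v, Kc σ with hP
  have hPc : Continuous P := hKc.continuous_primitive 0
  set NK : ℝ := ∫ σ, |Kc σ| with hNK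
  have hPbd : ∀ v, |P v| ≤ NK := by
    intro v
    have h1 : |P v| ≤ ∫ σ in Ι 0 v, |Kc σ| := by
      simpa [Real.norm_eq_abs] using
        (intervalIntegral.norm_integral_le_integral_norm_uIoc
          (a := (0:ℝ)) (b := v) (f := Kc) (μ := volume))
    refine h1.trans (setIntegral_le_integral hKc.abs ?_)
    filter_upwards with x using abs_nonneg _
  have hIg : IntegrableOn (fun τ => ktil 0 * g τ) (Ioc 0 u) volume := by
    refine bddIntegrableOn ((hgm.const_mul (ktil 0)).aestronglyMeasurable.restrict)
      (by simp) (M := |ktil 0| * C) fun x => ?_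
    rw [abs_mul]
    exact mul_le_mul_of_nonneg_left (hgC x) (abs_nonneg _)
  have hIPg : IntegrableOn (fun τ => P (u - τ) * g τ) (Ioc 0 u) volume := by
    refine bddIntegrableOn ?_ (by simp) (M := NK * C) fun x => ?_
    · exact (((hPc.comp (continuous_const.sub continuous_id)).measurable.mul
        hgm).aestronglyMeasurable.restrict)
    · rw [abs_mul]
      exact mul_le_mul (hPbd _) (hgC x) (abs_nonneg _)
        (le_trans (abs_nonneg _) (hPbd 0))
  have hQm : Measurable (fun s => ∫ σ in Ioc (0:ℝ) s, Kc σ * g (s - σ)) := conv_meas hKcm hgm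
  have hQbd : ∀ s, |∫ σ in Ioc (0:ℝ) s, Kc σ * g (s - σ)| ≤ NK * C := conv_bd hKc hgC
  have hIQ : IntegrableOn (fun s => ∫ σ in Ioc (0:ℝ) s, Kc σ * g (s - σ)) (Ioc 0 u) volume :=
    bddIntegrableOn hQm.aestronglyMeasurable.restrict (by simp) hQbd
  have e2 : ∫ τ in Ioc (0:ℝ) u, ktil (u - τ) * g τ
      = ∫ τ in Ioc (0:ℝ) u, (ktil 0 * g τ + P (u - τ) * g τ) := by
    apply setIntegral_congr_fun measurableSet_Ioc
    intro τ hτ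
    have hmem : u - τ ∈ Icc (0:ℝ) T := ⟨by linarith [hτ.2], by linarith [hτ.1, hu.2]⟩
    show ktil (u - τ) * g τ = ktil 0 * g τ + P (u - τ) * g τ
    rw [hkAC (u - τ) hmem]
    ring
  have e5 : ∫ τ in Ioc (0:ℝ) u, P (u - τ) * g τ
      = ∫ τ in Ioc (0:ℝ) u, (∫ σ in Ioc (0:ℝ) (u - τ), Kc σ) * g τ := by
    apply setIntegral_congr_fun measurableSet_Ioc
    intro τ hτ
    show P (u - τ) * g τ = (∫ σ in Ioc (0:ℝ) (u - τ), Kc σ) * g τ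
    have hPe : P (u - τ) = ∫ σ in Ioc (0:ℝ) (u - τ), Kc σ :=
      intervalIntegral.integral_of_le (by linarith [hτ.2] : (0:ℝ) ≤ u - τ)
    rw [hPe]
  have hfub1 := conv_fubini_aux hu0 hKc hKcm hgm hgC
  have hfub2 := conv_fubini2_aux hu0 hKc hKcm hgm hgC
  rw [intervalIntegral.integral_of_le hu0, intervalIntegral.integral_of_le hu0]
  rw [e2, MeasureTheory.integral_add hIg hIPg, e5, hfub1]
  rw [MeasureTheory.integral_add hIg hIQ, hfub2]

/-- Chain rule inequality for Caputo-type derivatives with `H¹` kernels: if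
`k̃ ∈ H¹([0,T])` is nonnegative and nonincreasing, `h` is convex and `C¹`, and
`f ∈ L^∞((0,T))`, then for a.e. `t ∈ (0,T)`,
`∂_t[k̃*(h(f) - h(f₀))](t) ≤ h'(f(t)) ∂_t[k̃*(f - f₀)](t)`. -/
theorem chain_rule_inequality_H1_kernel
    (T : ℝ) (hT : 0 < T)
    (ktil k' : ℝ → ℝ)
    (hknn : ∀ t ∈ Set.Icc (0:ℝ) T, 0 ≤ ktil t)
    (hkmono : AntitoneOn ktil (Set.Icc (0:ℝ) T))
    (hk' : MemLp k' 2 (volume.restrict (Set.Ioo 0 T)))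
    (hkAC : ∀ t ∈ Set.Icc (0:ℝ) T, ktil t = ktil 0 + ∫ s in (0:ℝ)..t, k' s)
    (h h' : ℝ → ℝ) (hconv : ConvexOn ℝ Set.univ h)
    (hderiv : ∀ x : ℝ, HasDerivAt h (h' x) x) (hcont : Continuous h')
    (f : ℝ → ℝ) (hf : MemLp f ⊤ (volume.restrict (Set.Ioo 0 T)))
    (f₀ : ℝ) :
    ∀ᵐ t ∂(volume.restrict (Set.Ioo 0 T)), ∃ D₁ D₂ : ℝ,
      HasDerivAt (fun s => ∫ τ in (0:ℝ)..s, ktil (s - τ) * (f τ - f₀)) D₁ t ∧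
      HasDerivAt (fun s => ∫ τ in (0:ℝ)..s, ktil (s - τ) * (h (f τ) - h f₀)) D₂ t ∧
      D₂ ≤ h' (f t) * D₁ := by
  classical
  set μ := volume.restrict (Set.Ioo 0 T) with hμ
  -- bounded measurable representative of f
  set C₀ := (eLpNorm f ⊤ μ).toReal with hC₀
  have hC₀nn : 0 ≤ C₀ := ENNReal.toReal_nonneg
  have hftop : eLpNormEssSup f μ ≠ ⊤ := by
    rw [← eLpNorm_exponent_top]; exact hf.2.ne
  have hfb' : ∀ᵐ x ∂μ, |f x| ≤ C₀ := by
    filter_upwards [ae_le_eLpNormEssSup (f := f) (μ := μ)] with x hx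
    have h1 := ENNReal.toReal_mono hftop hx
    rw [hC₀, eLpNorm_exponent_top]
    simpa [Real.norm_eq_abs] using h1
  obtain ⟨f1, hf1m, hfe⟩ : ∃ f1, StronglyMeasurable f1 ∧ f =ᵐ[μ] f1 :=
    ⟨hf.1.mk f, hf.1.stronglyMeasurable_mk, hf.1.ae_eq_mk⟩
  set fb : ℝ → ℝ := fun x => if |f1 x| ≤ C₀ then f1 x else 0 with hfbdef
  have hfbm : Measurable fb :=
    Measurable.ite (measurableSet_le hf1m.measurable.abs measurable_const)
      hf1m.measurable measurable_const
  have hfbb : ∀ x, |fb x| ≤ C₀ := by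
    intro x
    rw [hfbdef]
    dsimp only
    split
    · assumption
    · simpa using hC₀nn
  have hffb : ∀ᵐ x ∂μ, f x = fb x := by
    filter_upwards [hfe, hfb'] with x h1 h2
    rw [hfbdef]
    dsimp only
    rw [if_pos (by rw [← h1]; exact h2)]
    exact h1
  -- measurable representative of k', extended by zero
  obtain ⟨k1, hk1m, hke⟩ : ∃ k1, StronglyMeasurable k1 ∧ k' =ᵐ[μ] k1 :=
    ⟨hk'.1.mk k', hk'.1.stronglyMeasurable_mk, hk'.1.ae_eq_mk⟩
  set Kc : ℝ → ℝ := (Set.Ioo 0 T).indicator k1 with hKcdef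
  have hKcm : Measurable Kc := hk1m.measurable.indicator measurableSet_Ioo
  haveI : IsFiniteMeasure μ := by
    constructor
    rw [hμ, Measure.restrict_apply_univ]
    exact measure_Ioo_lt_top
  have hKcInt : Integrable Kc volume := by
    rw [hKcdef, integrable_indicator_iff measurableSet_Ioo]
    have h2 : MemLp k1 2 μ := hk'.ae_eq hke
    exact h2.integrable (by norm_num)
  have haeT : ∀ᵐ x : ℝ ∂(volume : Measure ℝ), x ≠ T := by
    rw [ae_iff]
    have hset : {x : ℝ | ¬x ≠ T} = {T} := by ext x; simp
    rw [hset]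
    exact Real.volume_singleton
  have hkglob : ∀ᵐ x : ℝ ∂(volume : Measure ℝ), x ∈ Set.Ioo 0 T → k' x = Kc x := by
    rw [← ae_restrict_iff' measurableSet_Ioo]
    have : ∀ᵐ x ∂μ, k' x = Kc x := by
      filter_upwards [hke, ae_restrict_mem measurableSet_Ioo] with x h1 h2
      rw [h1, hKcdef, Set.indicator_of_mem h2]
    exact this
  have hkACc : ∀ v ∈ Set.Icc (0:ℝ) T, ktil v = ktil 0 + ∫ σ in (0:ℝ)..v, Kc σ := by
    intro v hv
    rw [hkAC v hv]
    congr 1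
    rw [intervalIntegral.integral_of_le hv.1, intervalIntegral.integral_of_le hv.1]
    apply setIntegral_congr_ae measurableSet_Ioc
    filter_upwards [hkglob, haeT] with x h1 h2 hx
    exact h1 ⟨hx.1, lt_of_le_of_ne (hx.2.trans hv.2) h2⟩
  -- bounds for h ∘ fb
  have hhc : Continuous h := by
    rw [continuous_iff_continuousAt]
    exact fun x => (hderiv x).differentiableAt.continuousAt
  obtain ⟨M, hM⟩ :=
    (isCompact_Icc (a := -C₀) (b := C₀)).exists_bound_of_continuousOn hhc.continuousOn
  set g1 : ℝ → ℝ := fun τ => fb τ - f₀ with hg1def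
  set g2 : ℝ → ℝ := fun τ => h (fb τ) - h f₀ with hg2def
  have hg1m : Measurable g1 := hfbm.sub measurable_const
  have hg2m : Measurable g2 := (hhc.measurable.comp hfbm).sub measurable_const
  have hg1b : ∀ x, |g1 x| ≤ C₀ + |f₀| := by
    intro x
    rw [hg1def]
    dsimp only
    calc |fb x - f₀| ≤ |fb x| + |f₀| := abs_sub_le'' (fb x) f₀
      _ ≤ C₀ + |f₀| := add_le_add (hfbb x) le_rfl
  have hhfb : ∀ x, |h (fb x)| ≤ M := by
    intro x
    have : fb x ∈ Set.Icc (-C₀) C₀ := by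
      rcases abs_le.1 (hfbb x) with ⟨ha, hb⟩
      exact ⟨ha, hb⟩
    simpa [Real.norm_eq_abs] using hM (fb x) this
  have hg2b : ∀ x, |g2 x| ≤ M + |h f₀| := by
    intro x
    rw [hg2def]
    dsimp only
    calc |h (fb x) - h f₀| ≤ |h (fb x)| + |h f₀| := abs_sub_le'' _ _
      _ ≤ M + |h f₀| := add_le_add (hhfb x) le_rfl
  -- the densities
  set NK : ℝ := ∫ σ, |Kc σ| with hNKdef
  set q1 : ℝ → ℝ := fun s => ktil 0 * g1 s + ∫ σ in Set.Ioc (0:ℝ) s, Kc σ * g1 (s - σ)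
    with hq1def
  set q2 : ℝ → ℝ := fun s => ktil 0 * g2 s + ∫ σ in Set.Ioc (0:ℝ) s, Kc σ * g2 (s - σ)
    with hq2def
  have hq1m : Measurable q1 := (hg1m.const_mul (ktil 0)).add (conv_meas hKcm hg1m)
  have hq2m : Measurable q2 := (hg2m.const_mul (ktil 0)).add (conv_meas hKcm hg2m)
  have hq1b : ∀ s, |q1 s| ≤ |ktil 0| * (C₀ + |f₀|) + NK * (C₀ + |f₀|) := by
    intro s
    rw [hq1def]
    dsimp only
    calc |ktil 0 * g1 s + ∫ σ in Set.Ioc (0:ℝ) s, Kc σ * g1 (s - σ)|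
        ≤ |ktil 0 * g1 s| + |∫ σ in Set.Ioc (0:ℝ) s, Kc σ * g1 (s - σ)| := abs_add_le _ _
      _ ≤ |ktil 0| * (C₀ + |f₀|) + NK * (C₀ + |f₀|) := by
          apply add_le_add
          · rw [abs_mul]
            exact mul_le_mul_of_nonneg_left (hg1b s) (abs_nonneg _)
          · exact conv_bd hKcInt hg1b s
  have hq2b : ∀ s, |q2 s| ≤ |ktil 0| * (M + |h f₀|) + NK * (M + |h f₀|) := by
    intro s
    rw [hq2def]
    dsimp only
    calc |ktil 0 * g2 s + ∫ σ in Set.Ioc (0:ℝ) s, Kc σ * g2 (s - σ)|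
        ≤ |ktil 0 * g2 s| + |∫ σ in Set.Ioc (0:ℝ) s, Kc σ * g2 (s - σ)| := abs_add_le _ _
      _ ≤ |ktil 0| * (M + |h f₀|) + NK * (M + |h f₀|) := by
          apply add_le_add
          · rw [abs_mul]
            exact mul_le_mul_of_nonneg_left (hg2b s) (abs_nonneg _)
          · exact conv_bd hKcInt hg2b s
  set q1' : ℝ → ℝ := (Set.Ioo 0 T).indicator q1 with hq1'def
  set q2' : ℝ → ℝ := (Set.Ioo 0 T).indicator q2 with hq2'def
  have hq1'int : Integrable q1' volume := by
    rw [hq1'def, integrable_indicator_iff measurableSet_Ioo]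
    exact bddIntegrableOn hq1m.aestronglyMeasurable.restrict (by simp) hq1b
  have hq2'int : Integrable q2' volume := by
    rw [hq2'def, integrable_indicator_iff measurableSet_Ioo]
    exact bddIntegrableOn hq2m.aestronglyMeasurable.restrict (by simp) hq2b
  have hD1 := ae_hasDerivAt_primitive hq1'int
  have hD2 := ae_hasDerivAt_primitive hq2'int
  -- Kc is a.e. nonpositive
  have hKc_nonpos : ∀ᵐ σ : ℝ ∂(volume : Measure ℝ), Kc σ ≤ 0 := by
    filter_upwards [ae_hasDerivAt_primitive hKcInt] with σ hσ
    by_cases hmem : σ ∈ Set.Ioo 0 T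
    · rw [hasDerivAt_iff_tendsto_slope] at hσ
      have hmono : Tendsto (slope (fun u => ∫ s in (0:ℝ)..u, Kc s) σ) (𝓝[>] σ) (𝓝 (Kc σ)) :=
        hσ.mono_left (nhdsWithin_mono σ (fun x hx => ne_of_gt hx))
      refine le_of_tendsto hmono ?_
      filter_upwards [Ioo_mem_nhdsGT_of_mem ⟨le_refl σ, hmem.2⟩] with u hu
      rw [slope_def_field]
      apply div_nonpos_iff.2
      right
      constructor
      · have h1 : ∫ s in (0:ℝ)..u, Kc s = ktil u - ktil 0 := by
          have := hkACc u ⟨by linarith [hmem.1, hu.1], hu.2.le⟩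
          linarith
        have h2 : ∫ s in (0:ℝ)..σ, Kc s = ktil σ - ktil 0 := by
          have := hkACc σ ⟨hmem.1.le, hmem.2.le⟩
          linarith
        rw [h1, h2]
        have := hkmono ⟨hmem.1.le, hmem.2.le⟩
          ⟨by linarith [hmem.1, hu.1], hu.2.le⟩ hu.1.le
        linarith
      · linarith [hu.1]
    · rw [hKcdef, Set.indicator_of_notMem hmem]
  -- main pointwise argument
  filter_upwards [hffb, ae_restrict_mem measurableSet_Ioo,
    ae_restrict_of_ae hD1, ae_restrict_of_ae hD2] with t hft ht hd1 hd2
  have ht0 : 0 < t := ht.1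
  have htT : t < T := ht.2
  have hEq1 : ∀ s ∈ Set.Ioo (0:ℝ) T,
      (∫ τ in (0:ℝ)..s, ktil (s - τ) * (f τ - f₀)) = ∫ u in (0:ℝ)..s, q1' u := by
    intro s hs
    have hs0 : (0:ℝ) ≤ s := hs.1.le
    have hsubs : Set.Ioc 0 s ⊆ Set.Ioo 0 T := fun x hx => ⟨hx.1, lt_of_le_of_lt hx.2 hs.2⟩
    have step1 : (∫ τ in (0:ℝ)..s, ktil (s - τ) * (f τ - f₀))
        = ∫ τ in (0:ℝ)..s, ktil (s - τ) * g1 τ := by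
      rw [intervalIntegral.integral_of_le hs0, intervalIntegral.integral_of_le hs0]
      apply MeasureTheory.integral_congr_ae
      have hres : ∀ᵐ τ ∂volume.restrict (Set.Ioc 0 s), f τ = fb τ :=
        ae_restrict_of_ae_restrict_of_subset hsubs hffb
      filter_upwards [hres] with τ hτ
      rw [hg1def]
      dsimp only
      rw [hτ]
    have step2 := core_repr T ktil Kc g1 hKcInt hKcm hkACc hg1m hg1b s ⟨hs0, hs.2.le⟩
    have step3 : (∫ u in (0:ℝ)..s, (ktil 0 * g1 u + ∫ σ in Set.Ioc (0:ℝ) u, Kc σ * g1 (u - σ)))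
        = ∫ u in (0:ℝ)..s, q1' u := by
      rw [intervalIntegral.integral_of_le hs0, intervalIntegral.integral_of_le hs0]
      apply setIntegral_congr_fun measurableSet_Ioc
      intro u hu
      rw [hq1'def, Set.indicator_of_mem (hsubs hu), hq1def]
    rw [step1, step2, step3]
  have hEq2 : ∀ s ∈ Set.Ioo (0:ℝ) T,
      (∫ τ in (0:ℝ)..s, ktil (s - τ) * (h (f τ) - h f₀)) = ∫ u in (0:ℝ)..s, q2' u := by
    intro s hs
    have hs0 : (0:ℝ) ≤ s := hs.1.le
    have hsubs : Set.Ioc 0 s ⊆ Set.Ioo 0 T := fun x hx => ⟨hx.1, lt_of_le_of_lt hx.2 hs.2⟩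
    have step1 : (∫ τ in (0:ℝ)..s, ktil (s - τ) * (h (f τ) - h f₀))
        = ∫ τ in (0:ℝ)..s, ktil (s - τ) * g2 τ := by
      rw [intervalIntegral.integral_of_le hs0, intervalIntegral.integral_of_le hs0]
      apply MeasureTheory.integral_congr_ae
      have hres : ∀ᵐ τ ∂volume.restrict (Set.Ioc 0 s), f τ = fb τ :=
        ae_restrict_of_ae_restrict_of_subset hsubs hffb
      filter_upwards [hres] with τ hτ
      rw [hg2def]
      dsimp only
      rw [hτ]
    have step2 := core_repr T ktil Kc g2 hKcInt hKcm hkACc hg2m hg2b s ⟨hs0, hs.2.le⟩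
    have step3 : (∫ u in (0:ℝ)..s, (ktil 0 * g2 u + ∫ σ in Set.Ioc (0:ℝ) u, Kc σ * g2 (u - σ)))
        = ∫ u in (0:ℝ)..s, q2' u := by
      rw [intervalIntegral.integral_of_le hs0, intervalIntegral.integral_of_le hs0]
      apply setIntegral_congr_fun measurableSet_Ioc
      intro u hu
      rw [hq2'def, Set.indicator_of_mem (hsubs hu), hq2def]
    rw [step1, step2, step3]
  have hmem_nhds : Set.Ioo (0:ℝ) T ∈ 𝓝 t := isOpen_Ioo.mem_nhds ht
  have hd1' : HasDerivAt (fun s => ∫ τ in (0:ℝ)..s, ktil (s - τ) * (f τ - f₀)) (q1' t) t := by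
    apply hd1.congr_of_eventuallyEq
    filter_upwards [hmem_nhds] with s hs using hEq1 s hs
  have hd2' : HasDerivAt (fun s => ∫ τ in (0:ℝ)..s, ktil (s - τ) * (h (f τ) - h f₀)) (q2' t) t := by
    apply hd2.congr_of_eventuallyEq
    filter_upwards [hmem_nhds] with s hs using hEq2 s hs
  refine ⟨q1' t, q2' t, hd1', hd2', ?_⟩
  -- the convexity inequality
  have hq1t : q1' t = q1 t := by rw [hq1'def]; exact Set.indicator_of_mem ht _
  have hq2t : q2' t = q2 t := by rw [hq2'def]; exact Set.indicator_of_mem ht _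
  rw [hq1t, hq2t, hft]
  set a : ℝ := fb t with hadef
  set α : ℝ := h' (fb t) with hαdef
  have hA0 : 0 ≤ α * (a - f₀) - (h a - h f₀) := by
    have := tangent_le hconv hderiv a f₀
    rw [hαdef, hadef]
    rw [hadef] at this
    linarith
  set A : ℝ := α * (a - f₀) - (h a - h f₀) with hAdef
  set B : ℝ → ℝ := fun σ => (h (fb (t - σ)) - h a) - α * (fb (t - σ) - a) with hBdef
  have hB0 : ∀ σ, 0 ≤ B σ := by
    intro σ
    have := tangent_le hconv hderiv a (fb (t - σ))
    rw [hBdef]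
    dsimp only
    linarith
  -- integrability over Ioc 0 t of Kc * (bounded measurable)
  have hint : ∀ (φ : ℝ → ℝ), Measurable φ → ∀ (Mb : ℝ), (∀ x, |φ x| ≤ Mb) →
      IntegrableOn (fun σ => Kc σ * φ (t - σ)) (Set.Ioc 0 t) volume := by
    intro φ hφ Mb hMφ
    have h1 : IntegrableOn (fun σ => φ (t - σ) * Kc σ) (Set.Ioc 0 t) volume := by
      apply Integrable.bdd_mul (c := Mb) hKcInt.integrableOn
        ((hφ.comp (measurable_const.sub measurable_id)).aestronglyMeasurable.restrict)
      filter_upwards with x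
      simpa [Real.norm_eq_abs] using hMφ (t - x)
    exact h1.congr (Filter.EventuallyEq.of_eq (funext fun σ => mul_comm _ _))
  have hI1int : IntegrableOn (fun σ => Kc σ * g1 (t - σ)) (Set.Ioc 0 t) volume :=
    hint g1 hg1m _ hg1b
  have hI2int : IntegrableOn (fun σ => Kc σ * g2 (t - σ)) (Set.Ioc 0 t) volume :=
    hint g2 hg2m _ hg2b
  have hBm : Measurable B := by
    rw [hBdef]
    have hfbt : Measurable fun σ => fb (t - σ) :=
      hfbm.comp (measurable_const.sub measurable_id)
    exact ((hhc.measurable.comp hfbt).sub measurable_const).sub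
      ((hfbt.sub measurable_const).const_mul α)
  have hBb : ∀ x, |B x| ≤ (M + |h a|) + |α| * (C₀ + |a|) := by
    intro x
    rw [hBdef]
    dsimp only
    calc |h (fb (t - x)) - h a - α * (fb (t - x) - a)|
        ≤ |h (fb (t - x)) - h a| + |α * (fb (t - x) - a)| := abs_sub_le'' _ _
      _ ≤ (M + |h a|) + |α| * (C₀ + |a|) := by
          apply add_le_add
          · calc |h (fb (t - x)) - h a| ≤ |h (fb (t - x))| + |h a| := abs_sub_le'' _ _
              _ ≤ M + |h a| := add_le_add (hhfb _) le_rfl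
          · rw [abs_mul]
            apply mul_le_mul_of_nonneg_left _ (abs_nonneg _)
            calc |fb (t - x) - a| ≤ |fb (t - x)| + |a| := abs_sub_le'' _ _
              _ ≤ C₀ + |a| := add_le_add (hfbb _) le_rfl
  have hBint : IntegrableOn (fun σ => Kc σ * B σ) (Set.Ioc 0 t) volume := by
    have h1 : IntegrableOn (fun σ => B σ * Kc σ) (Set.Ioc 0 t) volume := by
      apply Integrable.bdd_mul (c := (M + |h a|) + |α| * (C₀ + |a|)) hKcInt.integrableOn
        (hBm.aestronglyMeasurable.restrict)
      filter_upwards with x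
      simpa [Real.norm_eq_abs] using hBb x
    exact h1.congr (Filter.EventuallyEq.of_eq (funext fun σ => mul_comm _ _))
  have eqP : ∫ σ in Set.Ioc (0:ℝ) t, Kc σ = ktil t - ktil 0 := by
    have h1 := hkACc t ⟨ht0.le, htT.le⟩
    rw [intervalIntegral.integral_of_le ht0.le] at h1
    linarith
  -- pointwise identity inside the integral
  have hptwise : ∀ σ : ℝ, α * (Kc σ * g1 (t - σ)) - Kc σ * g2 (t - σ) = Kc σ * A - Kc σ * B σ := by
    intro σ
    rw [hg1def, hg2def, hAdef, hBdef]
    dsimp only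
    ring
  have hsplit : α * (∫ σ in Set.Ioc (0:ℝ) t, Kc σ * g1 (t - σ))
      - (∫ σ in Set.Ioc (0:ℝ) t, Kc σ * g2 (t - σ))
      = A * (ktil t - ktil 0) - ∫ σ in Set.Ioc (0:ℝ) t, Kc σ * B σ := by
    have e1 : α * (∫ σ in Set.Ioc (0:ℝ) t, Kc σ * g1 (t - σ))
        - (∫ σ in Set.Ioc (0:ℝ) t, Kc σ * g2 (t - σ))
        = ∫ σ in Set.Ioc (0:ℝ) t, (α * (Kc σ * g1 (t - σ)) - Kc σ * g2 (t - σ)) := by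
      rw [MeasureTheory.integral_sub (hI1int.const_mul α) hI2int,
        MeasureTheory.integral_const_mul]
    have e2 : ∫ σ in Set.Ioc (0:ℝ) t, (α * (Kc σ * g1 (t - σ)) - Kc σ * g2 (t - σ))
        = ∫ σ in Set.Ioc (0:ℝ) t, (Kc σ * A - Kc σ * B σ) := by
      apply MeasureTheory.integral_congr_ae
      filter_upwards with σ using hptwise σ
    have e3 : ∫ σ in Set.Ioc (0:ℝ) t, (Kc σ * A - Kc σ * B σ)
        = (∫ σ in Set.Ioc (0:ℝ) t, Kc σ) * A - ∫ σ in Set.Ioc (0:ℝ) t, Kc σ * B σ := by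
      rw [MeasureTheory.integral_sub (hKcInt.integrableOn.mul_const A) hBint,
        MeasureTheory.integral_mul_const]
    rw [e1, e2, e3, eqP]
    ring
  have hIBle : ∫ σ in Set.Ioc (0:ℝ) t, Kc σ * B σ ≤ 0 := by
    apply integral_nonpos_of_ae
    filter_upwards [ae_restrict_of_ae hKc_nonpos] with σ hσ
    show Kc σ * B σ ≤ (0:ℝ)
    nlinarith [hB0 σ]
  have hktt : 0 ≤ ktil t := hknn t ⟨ht0.le, htT.le⟩
  have hq1val : q1 t = ktil 0 * g1 t + ∫ σ in Set.Ioc (0:ℝ) t, Kc σ * g1 (t - σ) := by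
    rw [hq1def]
  have hq2val : q2 t = ktil 0 * g2 t + ∫ σ in Set.Ioc (0:ℝ) t, Kc σ * g2 (t - σ) := by
    rw [hq2def]
  rw [hq1val, hq2val]
  have hg1t : g1 t = a - f₀ := by simp only [hg1def, hadef]
  have hg2t : g2 t = h a - h f₀ := by simp only [hg2def, hadef]
  have expand : α * (ktil 0 * g1 t + ∫ σ in Set.Ioc (0:ℝ) t, Kc σ * g1 (t - σ))
      - (ktil 0 * g2 t + ∫ σ in Set.Ioc (0:ℝ) t, Kc σ * g2 (t - σ))
      = ktil 0 * (α * g1 t - g2 t)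
        + (α * (∫ σ in Set.Ioc (0:ℝ) t, Kc σ * g1 (t - σ))
          - (∫ σ in Set.Ioc (0:ℝ) t, Kc σ * g2 (t - σ))) := by ring
  have hval : α * g1 t - g2 t = A := by rw [hg1t, hg2t, hAdef]
  have final : 0 ≤ α * (ktil 0 * g1 t + ∫ σ in Set.Ioc (0:ℝ) t, Kc σ * g1 (t - σ))
      - (ktil 0 * g2 t + ∫ σ in Set.Ioc (0:ℝ) t, Kc σ * g2 (t - σ)) := by
    rw [expand, hval, hsplit]
    have h5 : ktil 0 * A + (A * (ktil t - ktil 0) - ∫ σ in Set.Ioc (0:ℝ) t, Kc σ * B σ)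
        = A * ktil t - ∫ σ in Set.Ioc (0:ℝ) t, Kc σ * B σ := by ring
    rw [h5]
    have h6 := mul_nonneg hA0 hktt
    linarith
  linarith
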